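/- Let Ω ⊆ ℝ^d be a bounded open set, and let v ∈ C¹(Ω̄, ℝ^d), φ ∈ C¹(ℝ^d). Then ∫_Ω φ (div v)² dx − ∑_{i,j} ∫_Ω φ ∂_j v_i ∂_i v_j dx = ∫_Ω {(v·∇)v}·∇φ dx − ∫_Ω (v·∇φ) div v dx + ∫_{∂Ω} φ [ v_ν div v − ((v·∇)v)·ν ] dσ, where ν is the outward normal and v_ν = v·ν, assuming ∂Ω is C¹ so that the divergence theorem applies. -/

import Mathlib

open MeasureTheory

/-- Partial derivative in direction `i`. -/
noncomputable def pd {d : ℕ} (i : Fin d) (f : (Fin d → ℝ) → ℝ) (x : Fin d → ℝ) : ℝ :=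
  fderiv ℝ f x (Pi.single i 1)

open Convolution Filter Topology

lemma pd_mul {f g : (Fin d → ℝ) → ℝ} {x : Fin d → ℝ} (hf : DifferentiableAt ℝ f x)
    (hg : DifferentiableAt ℝ g x) (i : Fin d) :
    pd i (fun y => f y * g y) x = pd i f x * g x + f x * pd i g x := by
  unfold pd
  rw [fderiv_fun_mul hf hg]
  simp [mul_comm]
  ring

lemma pd_sub {f g : (Fin d → ℝ) → ℝ} {x : Fin d → ℝ} (hf : DifferentiableAt ℝ f x)
    (hg : DifferentiableAt ℝ g x) (i : Fin d) :
    pd i (fun y => f y - g y) x = pd i f x - pd i g x := by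
  unfold pd; rw [fderiv_fun_sub hf hg]; simp

lemma pd_sum {ι : Type*} {s : Finset ι} {f : ι → (Fin d → ℝ) → ℝ} {x : Fin d → ℝ}
    (hf : ∀ j ∈ s, DifferentiableAt ℝ (f j) x) (i : Fin d) :
    pd i (fun y => ∑ j ∈ s, f j y) x = ∑ j ∈ s, pd i (f j) x := by
  unfold pd; rw [fderiv_fun_sum hf]; simp

lemma pd_contDiff {n m : WithTop ℕ∞} {f : (Fin d → ℝ) → ℝ} (hf : ContDiff ℝ n f)
    (hmn : m + 1 ≤ n) (i : Fin d) : ContDiff ℝ m (pd i f) := by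
  have h := (ContinuousLinearMap.apply ℝ ℝ ((Pi.single i 1 : Fin d → ℝ))).contDiff
    (n := m) |>.comp (hf.fderiv_right hmn)
  exact h

lemma pd_continuous {f : (Fin d → ℝ) → ℝ} (hf : ContDiff ℝ 1 f) (i : Fin d) :
    Continuous (pd i f) :=
  (pd_contDiff (m := 0) hf (by norm_num) i).continuous

lemma pd_comm {f : (Fin d → ℝ) → ℝ} (hf : ContDiff ℝ 2 f) (i j : Fin d) (x : Fin d → ℝ) :
    pd i (pd j f) x = pd j (pd i f) x := by
  have hdf : Differentiable ℝ f := hf.differentiable (by norm_num)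
  have h2 : DifferentiableAt ℝ (fderiv ℝ f) x :=
    ((hf.fderiv_right (m := 1) (by norm_num)).differentiable (by norm_num)) x
  have key : ∀ a b : Fin d, pd a (pd b f) x
      = fderiv ℝ (fderiv ℝ f) x (Pi.single a 1) (Pi.single b 1) := by
    intro a b
    unfold pd
    rw [fderiv_clm_apply h2 (differentiableAt_const _)]
    simp
  rw [key, key,
    second_derivative_symmetric (fun y => (hdf y).hasFDerivAt) h2.hasFDerivAt _ _]

lemma pd_proj {u : (Fin d → ℝ) → (Fin d → ℝ)} {x : Fin d → ℝ}
    (hu : DifferentiableAt ℝ u x) (i j : Fin d) :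
    pd i (fun y => u y j) x = fderiv ℝ u x (Pi.single i 1) j := by
  have h : HasFDerivAt (fun y => u y j)
      ((ContinuousLinearMap.proj j).comp (fderiv ℝ u x)) x :=
    HasFDerivAt.comp x ((ContinuousLinearMap.proj (R := ℝ) (φ := fun _ : Fin d => ℝ) j).hasFDerivAt)
      hu.hasFDerivAt
  unfold pd
  rw [h.fderiv]
  rfl

lemma smooth_case (Ω : Set (Fin d → ℝ)) (hbd : Bornology.IsBounded Ω)
    (σ : Measure (Fin d → ℝ)) (ν : (Fin d → ℝ) → (Fin d → ℝ))
    (hdivthm : ∀ F : (Fin d → ℝ) → (Fin d → ℝ), ContDiff ℝ 1 F →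
      ∫ x in Ω, ∑ i, pd i (fun y => F y i) x = ∫ x, ∑ i, F x i * ν x i ∂σ)
    (u : (Fin d → ℝ) → (Fin d → ℝ)) (hu : ContDiff ℝ 2 u)
    (φ : (Fin d → ℝ) → ℝ) (hφ : ContDiff ℝ 1 φ) :
    (∫ x in Ω, φ x * (∑ i, pd i (fun y => u y i) x) ^ 2)
      - ∑ i, ∑ j, ∫ x in Ω, φ x * pd j (fun y => u y i) x * pd i (fun y => u y j) x
    = (∫ x in Ω, ∑ j, (∑ i, u x i * pd i (fun y => u y j) x) * pd j φ x)
      - (∫ x in Ω, (∑ i, u x i * pd i φ x) * ∑ i, pd i (fun y => u y i) x)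
      + ∫ x, φ x * ((∑ i, u x i * ν x i) * (∑ i, pd i (fun y => u y i) x)
          - ∑ j, (∑ i, u x i * pd i (fun y => u y j) x) * ν x j) ∂σ := by
  classical
  have hK : IsCompact (closure Ω) := hbd.isCompact_closure
  have hIntOn : ∀ {f : (Fin d → ℝ) → ℝ}, Continuous f → IntegrableOn f Ω volume := by
    intro f hf
    exact ((hf.continuousOn).integrableOn_compact hK).mono_set subset_closure
  have huc : ∀ j, ContDiff ℝ 2 (fun y => u y j) := by
    intro j
    exact (ContinuousLinearMap.proj (R := ℝ) (φ := fun _ : Fin d => ℝ) j).contDiff.comp hu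
  have hD : ∀ i j, ContDiff ℝ 1 (pd i (fun y => u y j)) :=
    fun i j => pd_contDiff (huc j) (by norm_num) i
  set w : (Fin d → ℝ) → ℝ := fun x => ∑ i, pd i (fun y => u y i) x with hw_def
  have hw : ContDiff ℝ 1 w := ContDiff.sum fun i _ => hD i i
  set S : Fin d → (Fin d → ℝ) → ℝ :=
    fun j x => ∑ i, u x i * pd i (fun y => u y j) x with hS_def
  have hS : ∀ j, ContDiff ℝ 1 (S j) :=
    fun j => ContDiff.sum fun i _ => ((huc i).of_le one_le_two).mul (hD i j)
  set F : (Fin d → ℝ) → (Fin d → ℝ) :=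
    fun x j => φ x * (u x j * w x - S j x) with hF_def
  have hF : ContDiff ℝ 1 F :=
    contDiff_pi.mpr fun j => hφ.mul ((((huc j).of_le one_le_two).mul hw).sub (hS j))
  -- pointwise divergence identity
  have hdiv_pt : ∀ x, ∑ j, pd j (fun y => F y j) x =
      φ x * w x ^ 2
        - φ x * (∑ i, ∑ j, pd j (fun y => u y i) x * pd i (fun y => u y j) x)
        + ((∑ i, u x i * pd i φ x) * w x - ∑ j, S j x * pd j φ x) := by
    intro x
    have dφ : DifferentiableAt ℝ φ x := (hφ.differentiable (by norm_num)) x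
    have du : ∀ j, DifferentiableAt ℝ (fun y => u y j) x :=
      fun j => ((huc j).differentiable (by norm_num)) x
    have dD : ∀ i j, DifferentiableAt ℝ (pd i (fun y => u y j)) x :=
      fun i j => ((hD i j).differentiable (by norm_num)) x
    have dw : DifferentiableAt ℝ w x := (hw.differentiable (by norm_num)) x
    have dS : ∀ j, DifferentiableAt ℝ (S j) x := fun j => ((hS j).differentiable (by norm_num)) x
    have hwx : ∀ j, pd j w x = ∑ i, pd j (pd i (fun y => u y i)) x :=
      fun j => pd_sum (fun i _ => dD i i) j
    have hSj : ∀ j, pd j (S j) x = ∑ i, (pd j (fun y => u y i) x * pd i (fun y => u y j) x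
        + u x i * pd j (pd i (fun y => u y j)) x) := by
      intro j
      have h0 : pd j (S j) x
          = ∑ i, pd j (fun y => u y i * pd i (fun z => u z j) y) x :=
        pd_sum (fun i _ => (du i).mul (dD i j)) j
      rw [h0]
      exact Finset.sum_congr rfl fun i _ => pd_mul (du i) (dD i j) j
    have hstep : ∀ j, pd j (fun y => F y j) x =
        pd j φ x * (u x j * w x - S j x)
          + φ x * ((pd j (fun y => u y j) x * w x + u x j * pd j w x) - pd j (S j) x) := by
      intro j
      have h1 : pd j (fun y => F y j) x
          = pd j (fun y => φ y * (u y j * w y - S j y)) x := rfl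
      rw [h1, pd_mul (g := fun y => u y j * w y - S j y) dφ (((du j).mul dw).sub (dS j)) j,
        pd_sub (f := fun y => u y j * w y) ((du j).mul dw) (dS j) j, pd_mul (du j) dw j]
    have hcancel : ∑ j, ∑ i, u x i * pd j (pd i (fun y => u y j)) x
        = ∑ j, u x j * pd j w x := by
      calc ∑ j, ∑ i, u x i * pd j (pd i (fun y => u y j)) x
          = ∑ j, ∑ i, u x i * pd i (pd j (fun y => u y j)) x := by
            refine Finset.sum_congr rfl fun j _ => Finset.sum_congr rfl fun i _ => ?_
            rw [pd_comm (huc j) j i x]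
        _ = ∑ i, ∑ j, u x i * pd i (pd j (fun y => u y j)) x := Finset.sum_comm
        _ = ∑ j, u x j * pd j w x := by
            refine Finset.sum_congr rfl fun j _ => ?_
            rw [hwx j, Finset.mul_sum]
    calc ∑ j, pd j (fun y => F y j) x
        = ∑ j, (pd j φ x * (u x j * w x - S j x)
          + φ x * ((pd j (fun y => u y j) x * w x + u x j * pd j w x)
            - ∑ i, (pd j (fun y => u y i) x * pd i (fun y => u y j) x
              + u x i * pd j (pd i (fun y => u y j)) x))) := by
          refine Finset.sum_congr rfl fun j _ => ?_
          rw [hstep j, hSj j]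
      _ = (∑ j, pd j φ x * (u x j * w x - S j x))
          + ((∑ j, φ x * (pd j (fun y => u y j) x * w x))
            + (∑ j, φ x * (u x j * pd j w x))
            - ((∑ j, φ x * ∑ i, pd j (fun y => u y i) x * pd i (fun y => u y j) x)
              + (∑ j, φ x * ∑ i, u x i * pd j (pd i (fun y => u y j)) x))) := by
          simp only [← Finset.sum_add_distrib, ← Finset.sum_sub_distrib]
          refine Finset.sum_congr rfl fun j _ => ?_
          rw [Finset.sum_add_distrib, Finset.mul_sum, Finset.mul_sum]
          ring
      _ = φ x * w x ^ 2
        - φ x * (∑ i, ∑ j, pd j (fun y => u y i) x * pd i (fun y => u y j) x)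
        + ((∑ i, u x i * pd i φ x) * w x - ∑ j, S j x * pd j φ x) := by
          have e1 : ∑ j, φ x * (pd j (fun y => u y j) x * w x) = φ x * w x ^ 2 := by
            rw [← Finset.mul_sum]
            have : ∑ j, pd j (fun y => u y j) x * w x = w x * w x := by
              rw [← Finset.sum_mul]
            rw [this]; ring
          have e2 : ∑ j, φ x * ∑ i, u x i * pd j (pd i (fun y => u y j)) x
              = ∑ j, φ x * (u x j * pd j w x) := by
            rw [← Finset.mul_sum, ← Finset.mul_sum, hcancel]
          have e3 : ∑ j, φ x * ∑ i, pd j (fun y => u y i) x * pd i (fun y => u y j) x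
              = φ x * ∑ i, ∑ j, pd j (fun y => u y i) x * pd i (fun y => u y j) x := by
            rw [← Finset.mul_sum, Finset.sum_comm]
          have e4 : ∑ j, pd j φ x * (u x j * w x - S j x)
              = (∑ i, u x i * pd i φ x) * w x - ∑ j, S j x * pd j φ x := by
            rw [Finset.sum_mul, ← Finset.sum_sub_distrib]
            refine Finset.sum_congr rfl fun j _ => ?_
            ring
          rw [e2, e3, e4, e1]
          ring
  -- continuity facts
  have cφ := hφ.continuous
  have cu : ∀ j, Continuous fun x => u x j := fun j => (huc j).continuous
  have cD : ∀ i j, Continuous (pd i (fun y => u y j)) := fun i j => (hD i j).continuous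
  have cw : Continuous w := hw.continuous
  have cS : ∀ j, Continuous (S j) := fun j => (hS j).continuous
  have key := hdivthm F hF
  have hL : (∫ x in Ω, ∑ j, pd j (fun y => F y j) x)
      = (∫ x in Ω, φ x * w x ^ 2)
        - (∫ x in Ω, φ x * (∑ i, ∑ j, pd j (fun y => u y i) x * pd i (fun y => u y j) x))
        + ((∫ x in Ω, (∑ i, u x i * pd i φ x) * w x)
          - ∫ x in Ω, ∑ j, S j x * pd j φ x) := by
    have Ia : IntegrableOn (fun x => φ x * w x ^ 2) Ω volume :=
      hIntOn (cφ.mul (cw.pow 2))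
    have Ib : IntegrableOn (fun x => φ x *
        (∑ i, ∑ j, pd j (fun y => u y i) x * pd i (fun y => u y j) x)) Ω volume :=
      hIntOn (cφ.mul (continuous_finset_sum _ fun i _ =>
        continuous_finset_sum _ fun j _ => (cD j i).mul (cD i j)))
    have Ic : IntegrableOn (fun x => (∑ i, u x i * pd i φ x) * w x) Ω volume :=
      hIntOn ((continuous_finset_sum _ fun i _ =>
        (cu i).mul (pd_continuous hφ i)).mul cw)
    have Id : IntegrableOn (fun x => ∑ j, S j x * pd j φ x) Ω volume :=
      hIntOn (continuous_finset_sum _ fun j _ => (cS j).mul (pd_continuous hφ j))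
    simp only [hdiv_pt]
    rw [← integral_sub Ia Ib, ← integral_sub Ic Id]
    exact integral_add (Ia.sub Ib) (Ic.sub Id)
  have hQ : (∫ x in Ω, φ x *
        (∑ i, ∑ j, pd j (fun y => u y i) x * pd i (fun y => u y j) x))
      = ∑ i, ∑ j, ∫ x in Ω,
          φ x * pd j (fun y => u y i) x * pd i (fun y => u y j) x := by
    have hpt : ∀ x : Fin d → ℝ, φ x *
        (∑ i, ∑ j, pd j (fun y => u y i) x * pd i (fun y => u y j) x)
        = ∑ i, ∑ j, φ x * pd j (fun y => u y i) x * pd i (fun y => u y j) x := by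
      intro x
      rw [Finset.mul_sum]
      refine Finset.sum_congr rfl fun i _ => ?_
      rw [Finset.mul_sum]
      exact Finset.sum_congr rfl fun j _ => by ring
    simp only [hpt]
    rw [integral_finset_sum _ (fun i _ => integrable_finset_sum _ fun j _ =>
      hIntOn (f := fun x => φ x * pd j (fun y => u y i) x * pd i (fun y => u y j) x)
        ((cφ.mul (cD j i)).mul (cD i j)))]
    exact Finset.sum_congr rfl fun i _ => integral_finset_sum _ fun j _ =>
      hIntOn (f := fun x => φ x * pd j (fun y => u y i) x * pd i (fun y => u y j) x)
        ((cφ.mul (cD j i)).mul (cD i j))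
  have hbpt : ∀ x, ∑ j, F x j * ν x j
      = φ x * ((∑ i, u x i * ν x i) * w x - ∑ j, S j x * ν x j) := by
    intro x
    calc ∑ j, F x j * ν x j
        = ∑ j, ((u x j * ν x j) * (φ x * w x) - (S j x * ν x j) * φ x) := by
          refine Finset.sum_congr rfl fun j _ => ?_
          show (φ x * (u x j * w x - S j x)) * ν x j = _
          ring
      _ = (∑ j, u x j * ν x j) * (φ x * w x) - (∑ j, S j x * ν x j) * φ x := by
          rw [Finset.sum_sub_distrib, Finset.sum_mul, Finset.sum_mul]
      _ = φ x * ((∑ i, u x i * ν x i) * w x - ∑ j, S j x * ν x j) := by ring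
  simp only [hbpt] at key
  rw [hL, hQ] at key
  linarith [key]

lemma nu_integrable (Ω : Set (Fin d → ℝ)) (hΩ : IsOpen Ω) (hne : Ω.Nonempty)
    (hbd : Bornology.IsBounded Ω)
    (σ : Measure (Fin d → ℝ)) (ν : (Fin d → ℝ) → (Fin d → ℝ))
    (hdivthm : ∀ F : (Fin d → ℝ) → (Fin d → ℝ), ContDiff ℝ 1 F →
      ∫ x in Ω, ∑ i, pd i (fun y => F y i) x = ∫ x, ∑ i, F x i * ν x i ∂σ)
    (k : Fin d) : Integrable (fun x => ν x k) σ := by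
  classical
  obtain ⟨r₀, hr₀⟩ := hbd.subset_closedBall 0
  set R : ℝ := max r₀ 0 with hR
  have hΩR : Ω ⊆ Metric.closedBall 0 R :=
    hr₀.trans (Metric.closedBall_subset_closedBall (le_max_left _ _))
  set F : (Fin d → ℝ) → (Fin d → ℝ) :=
    fun x => Pi.single k (2 + Real.arctan (x k)) with hFdef
  have hFc : ContDiff ℝ 1 F := by
    apply contDiff_pi.mpr
    intro i
    by_cases h : i = k
    · subst h
      simp only [hFdef, Pi.single_eq_same]
      exact contDiff_const.add (Real.contDiff_arctan.comp
        ((ContinuousLinearMap.proj (R := ℝ) (φ := fun _ : Fin d => ℝ) i).contDiff))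
    · simp only [hFdef, Pi.single_eq_of_ne h]
      exact contDiff_const
  have hdiv : ∀ x : Fin d → ℝ, ∑ i, pd i (fun y => F y i) x = 1 / (1 + (x k) ^ 2) := by
    intro x
    rw [Finset.sum_eq_single k]
    · have hproj : HasFDerivAt (fun y : Fin d → ℝ => y k)
          (ContinuousLinearMap.proj (R := ℝ) (φ := fun _ : Fin d => ℝ) k) x :=
        (ContinuousLinearMap.proj (R := ℝ) (φ := fun _ : Fin d => ℝ) k).hasFDerivAt
      have harc : HasFDerivAt (fun y : Fin d → ℝ => Real.arctan (y k))
          ((1 / (1 + (x k) ^ 2)) • (ContinuousLinearMap.proj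
            (R := ℝ) (φ := fun _ : Fin d => ℝ) k)) x :=
        by have := (Real.hasDerivAt_arctan (x k)).comp_hasFDerivAt x hproj; exact this
      have hfull : HasFDerivAt (fun y => F y k)
          ((1 / (1 + (x k) ^ 2)) • (ContinuousLinearMap.proj
            (R := ℝ) (φ := fun _ : Fin d => ℝ) k)) x := by
        have : (fun y => F y k) = fun y => 2 + Real.arctan (y k) := by
          funext y; simp [hFdef]
        rw [this]
        exact harc.const_add 2
      unfold pd
      rw [hfull.fderiv]
      simp
    · intro b _ hbk
      have : (fun y => F y b) = fun _ => (0 : ℝ) := by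
        funext y; simp [hFdef, Pi.single_eq_of_ne hbk]
      unfold pd
      rw [this, fderiv_fun_const]
      simp
    · intro h; exact absurd (Finset.mem_univ k) h
  have key := hdivthm F hFc
  have hCont : Continuous fun x : Fin d → ℝ => 1 / (1 + (x k) ^ 2) := by
    apply Continuous.div continuous_const
    · exact continuous_const.add ((continuous_apply k).pow 2)
    · intro x; positivity
  have hμΩ : volume Ω < ⊤ :=
    lt_of_le_of_lt (measure_mono subset_closure) hbd.isCompact_closure.measure_lt_top
  have hIntc : IntegrableOn (fun x : Fin d → ℝ => 1 / (1 + (x k) ^ 2)) Ω volume :=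
    ((hCont.continuousOn).integrableOn_compact hbd.isCompact_closure).mono_set subset_closure
  have hLpos : 0 < ∫ x in Ω, 1 / (1 + (x k) ^ 2) := by
    have hconst : (0:ℝ) < 1 / (1 + R ^ 2) := by positivity
    have hmono : ∫ x in Ω, 1 / (1 + R ^ 2) ≤ ∫ x in Ω, 1 / (1 + (x k) ^ 2) := by
      refine setIntegral_mono_on (integrableOn_const hμΩ.ne) hIntc
        hΩ.measurableSet ?_
      intro x hx
      have hxk : |x k| ≤ R := by
        have h1 := norm_le_pi_norm x k
        have h2 : ‖x‖ ≤ R := by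
          have := hΩR hx
          simpa [Metric.mem_closedBall, dist_zero_right] using this
        simpa using h1.trans h2
      have : (x k) ^ 2 ≤ R ^ 2 := sq_le_sq' (neg_le_of_abs_le hxk) (le_of_abs_le hxk)
      exact one_div_le_one_div_of_le (by positivity) (by linarith)
    have htR : (0:ℝ) < (volume Ω).toReal :=
      ENNReal.toReal_pos (hΩ.measure_pos volume hne).ne' hμΩ.ne
    calc (0:ℝ) < (volume Ω).toReal * (1 / (1 + R ^ 2)) := mul_pos htR hconst
      _ = ∫ _x in Ω, 1 / (1 + R ^ 2) := by rw [setIntegral_const, smul_eq_mul, measureReal_def]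
      _ ≤ ∫ x in Ω, 1 / (1 + (x k) ^ 2) := hmono
  simp only [hdiv] at key
  have hbpt : ∀ x : Fin d → ℝ, ∑ i, F x i * ν x i
      = (2 + Real.arctan (x k)) * ν x k := by
    intro x
    rw [Finset.sum_eq_single k]
    · simp [hFdef]
    · intro b _ hbk; simp [hFdef, Pi.single_eq_of_ne hbk]
    · intro h; exact absurd (Finset.mem_univ k) h
  simp only [hbpt] at key
  have hint1 : Integrable (fun x => (2 + Real.arctan (x k)) * ν x k) σ := by
    by_contra hcon
    rw [integral_undef hcon] at key
    exact absurd key (ne_of_gt hLpos)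
  have harc_pos : ∀ t : ℝ, (0:ℝ) < 2 + Real.arctan t := fun t => by
    have h1 := Real.neg_pi_div_two_lt_arctan t
    have hpi := Real.pi_lt_d2
    linarith
  have heq : (fun x : Fin d → ℝ => ν x k)
      = fun x => (2 + Real.arctan (x k))⁻¹ * ((2 + Real.arctan (x k)) * ν x k) := by
    funext x
    rw [← mul_assoc, inv_mul_cancel₀ (harc_pos (x k)).ne', one_mul]
  rw [heq]
  apply hint1.bdd_mul (c := (2 - Real.pi/2)⁻¹)
  · exact ((continuous_const.add (Real.continuous_arctan.comp
      (continuous_apply k))).inv₀ (fun x => (harc_pos _).ne')).aestronglyMeasurable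
  · refine Filter.Eventually.of_forall fun x => ?_
    have h1 : 2 - Real.pi/2 ≤ 2 + Real.arctan (x k) := by
      have := Real.neg_pi_div_two_lt_arctan (x k); linarith
    have h2 : (0:ℝ) < 2 - Real.pi/2 := by have := Real.pi_lt_d2; linarith
    rw [Real.norm_eq_abs, abs_of_pos (inv_pos.mpr (harc_pos _))]
    have := one_div_le_one_div_of_le h2 h1
    rw [one_div, one_div] at this
    exact this



set_option maxHeartbeats 3200000 in
/-- the intermediate double-integration-by-parts identity: for a bounded
open Ω ⊆ ℝ^d with C¹ boundary (encoded through a surface measure σ on ∂Ω and an outward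
unit normal field ν satisfying the divergence theorem), v ∈ C¹(Ω̄, ℝ^d) and φ ∈ C¹(ℝ^d):
∫_Ω φ(div v)² − ∑_{i,j} ∫_Ω φ ∂_j v_i ∂_i v_j
  = ∫_Ω {(v·∇)v}·∇φ − ∫_Ω (v·∇φ) div v + ∫_∂Ω φ [v_ν div v − ((v·∇)v)·ν] dσ. -/
theorem stmt_15 {d : ℕ} (Ω : Set (Fin d → ℝ)) (hΩ : IsOpen Ω)
    (hbd : Bornology.IsBounded Ω)
    (σ : Measure (Fin d → ℝ)) (ν : (Fin d → ℝ) → (Fin d → ℝ))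
    (hσ : ∀ s : Set (Fin d → ℝ), σ s = σ (s ∩ frontier Ω))
    (hν_unit : ∀ x ∈ frontier Ω, ∑ i, ν x i ^ 2 = 1)
    (hdivthm : ∀ F : (Fin d → ℝ) → (Fin d → ℝ), ContDiff ℝ 1 F →
      ∫ x in Ω, ∑ i, pd i (fun y => F y i) x = ∫ x, ∑ i, F x i * ν x i ∂σ)
    (v : (Fin d → ℝ) → (Fin d → ℝ)) (hv : ContDiff ℝ 1 v)
    (φ : (Fin d → ℝ) → ℝ) (hφ : ContDiff ℝ 1 φ) :
    (∫ x in Ω, φ x * (∑ i, pd i (fun y => v y i) x) ^ 2)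
      - ∑ i, ∑ j, ∫ x in Ω, φ x * pd j (fun y => v y i) x * pd i (fun y => v y j) x
    = (∫ x in Ω, ∑ j, (∑ i, v x i * pd i (fun y => v y j) x) * pd j φ x)
      - (∫ x in Ω, (∑ i, v x i * pd i φ x) * ∑ i, pd i (fun y => v y i) x)
      + ∫ x, φ x * ((∑ i, v x i * ν x i) * (∑ i, pd i (fun y => v y i) x)
          - ∑ j, (∑ i, v x i * pd i (fun y => v y j) x) * ν x j) ∂σ := by
  classical
  rcases Set.eq_empty_or_nonempty Ω with hemp | hne
  · have hσ0 : σ = 0 := by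
      have h := hσ Set.univ
      rw [hemp, frontier_empty, Set.inter_empty] at h
      exact Measure.measure_univ_eq_zero.mp (h.trans measure_empty)
    rw [hemp, hσ0]
    simp
  -- ===== nonempty case =====
  have hνint : ∀ k, Integrable (fun x => ν x k) σ :=
    fun k => nu_integrable Ω hΩ hne hbd σ ν hdivthm k
  have hνm : ∀ k, AEStronglyMeasurable (fun x => ν x k) σ :=
    fun k => (hνint k).aestronglyMeasurable
  have hσfr : ∀ᵐ x ∂σ, x ∈ closure Ω := by
    rw [MeasureTheory.ae_iff]
    have h : {x : Fin d → ℝ | ¬ x ∈ closure Ω} = (closure Ω)ᶜ := rfl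
    rw [h, hσ (closure Ω)ᶜ]
    have h2 : (closure Ω)ᶜ ∩ frontier Ω = ∅ := by
      rw [Set.eq_empty_iff_forall_notMem]
      rintro x ⟨hx1, hx2⟩
      exact hx1 (frontier_subset_closure hx2)
    rw [h2]; exact measure_empty
  have hμΩ : volume Ω < ⊤ :=
    lt_of_le_of_lt (measure_mono subset_closure) hbd.isCompact_closure.measure_lt_top
  have hΩmem : ∀ᵐ x ∂(volume.restrict Ω), x ∈ closure Ω := by
    filter_upwards [ae_restrict_mem hΩ.measurableSet] with x hx
    exact subset_closure hx
  -- radius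
  obtain ⟨r₀, hr₀⟩ := hbd.closure.subset_closedBall 0
  set R : ℝ := max r₀ 0 with hRdef
  have hclos : closure Ω ⊆ Metric.closedBall 0 R :=
    hr₀.trans (Metric.closedBall_subset_closedBall (le_max_left _ _))
  have hR0 : (0:ℝ) ≤ R := le_max_right _ _
  -- cutoff
  set χb : ContDiffBump (0 : Fin d → ℝ) := ⟨R + 2, R + 3, by positivity, by linarith⟩
    with hχdef
  set vt : (Fin d → ℝ) → (Fin d → ℝ) := fun y => χb y • v y with hvtdef
  have hvt : ContDiff ℝ 1 vt := by
    have hχ : ContDiff ℝ 1 (fun y => χb y) :=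
      (χb.contDiff (n := ⊤)).of_le (by exact_mod_cast le_top)
    exact hχ.smul hv
  have hvtc : HasCompactSupport vt := χb.hasCompactSupport.smul_right
  have hvt_eq : ∀ y ∈ Metric.closedBall (0 : Fin d → ℝ) (R + 2), vt y = v y := by
    intro y hy
    have h1 : χb y = 1 := χb.one_of_mem_closedBall hy
    simp [hvtdef, h1]
  have hfd_eq : ∀ y ∈ Metric.ball (0 : Fin d → ℝ) (R + 2), fderiv ℝ vt y = fderiv ℝ v y := by
    intro y hy
    apply Filter.EventuallyEq.fderiv_eq
    filter_upwards [Metric.isOpen_ball.mem_nhds hy] with z hz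
    exact hvt_eq z (Metric.ball_subset_closedBall hz)
  have hsub2 : closure Ω ⊆ Metric.ball (0 : Fin d → ℝ) (R + 2) := by
    intro x hx
    have := hclos hx
    rw [Metric.mem_closedBall] at this
    rw [Metric.mem_ball]
    linarith
  have hdv : Differentiable ℝ v := hv.differentiable (by norm_num)
  have hdvt : Differentiable ℝ vt := hvt.differentiable (by norm_num)
  have hpd_eqv : ∀ (i j : Fin d), ∀ x ∈ closure Ω,
      pd i (fun y => vt y j) x = pd i (fun y => v y j) x := by
    intro i j x hx
    rw [pd_proj (hdvt x) i j, pd_proj (hdv x) i j, hfd_eq x (hsub2 hx)]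
  have hvt_eqc : ∀ x ∈ closure Ω, ∀ j, vt x j = v x j := by
    intro x hx j
    rw [hvt_eq x (Metric.ball_subset_closedBall (hsub2 hx))]
  -- rewrite the goal in terms of vt
  have eqA : (∫ x in Ω, φ x * (∑ i, pd i (fun y => v y i) x) ^ 2)
      = ∫ x in Ω, φ x * (∑ i, pd i (fun y => vt y i) x) ^ 2 := by
    refine setIntegral_congr_fun hΩ.measurableSet fun x hx => ?_
    have hx' := subset_closure hx
    congr 1
    congr 1
    exact Finset.sum_congr rfl fun i _ => (hpd_eqv i i x hx').symm
  have eqB : ∀ i j : Fin d, (∫ x in Ω, φ x * pd j (fun y => v y i) x * pd i (fun y => v y j) x)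
      = ∫ x in Ω, φ x * pd j (fun y => vt y i) x * pd i (fun y => vt y j) x := by
    intro i j
    refine setIntegral_congr_fun hΩ.measurableSet fun x hx => ?_
    have hx' := subset_closure hx
    rw [hpd_eqv j i x hx', hpd_eqv i j x hx']
  have eqC : (∫ x in Ω, ∑ j, (∑ i, v x i * pd i (fun y => v y j) x) * pd j φ x)
      = ∫ x in Ω, ∑ j, (∑ i, vt x i * pd i (fun y => vt y j) x) * pd j φ x := by
    refine setIntegral_congr_fun hΩ.measurableSet fun x hx => ?_
    have hx' := subset_closure hx
    refine Finset.sum_congr rfl fun j _ => ?_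
    congr 1
    exact Finset.sum_congr rfl fun i _ => by
      rw [hpd_eqv i j x hx', hvt_eqc x hx' i]
  have eqD : (∫ x in Ω, (∑ i, v x i * pd i φ x) * ∑ i, pd i (fun y => v y i) x)
      = ∫ x in Ω, (∑ i, vt x i * pd i φ x) * ∑ i, pd i (fun y => vt y i) x := by
    refine setIntegral_congr_fun hΩ.measurableSet fun x hx => ?_
    have hx' := subset_closure hx
    congr 1
    · exact Finset.sum_congr rfl fun i _ => by rw [hvt_eqc x hx' i]
    · exact Finset.sum_congr rfl fun i _ => (hpd_eqv i i x hx').symm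
  have eqE : (∫ x, φ x * ((∑ i, v x i * ν x i) * (∑ i, pd i (fun y => v y i) x)
          - ∑ j, (∑ i, v x i * pd i (fun y => v y j) x) * ν x j) ∂σ)
      = ∫ x, φ x * ((∑ i, vt x i * ν x i) * (∑ i, pd i (fun y => vt y i) x)
          - ∑ j, (∑ i, vt x i * pd i (fun y => vt y j) x) * ν x j) ∂σ := by
    refine integral_congr_ae ?_
    filter_upwards [hσfr] with x hx
    congr 1
    congr 1
    · congr 1
      · exact Finset.sum_congr rfl fun i _ => by rw [hvt_eqc x hx i]
      · exact Finset.sum_congr rfl fun i _ => (hpd_eqv i i x hx).symm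
    · refine Finset.sum_congr rfl fun j _ => ?_
      congr 1
      exact Finset.sum_congr rfl fun i _ => by
        rw [hpd_eqv i j x hx, hvt_eqc x hx i]
  rw [eqA, eqC, eqD, eqE]
  have eqBs : (∑ i, ∑ j, ∫ x in Ω, φ x * pd j (fun y => v y i) x * pd i (fun y => v y j) x)
      = ∑ i, ∑ j, ∫ x in Ω, φ x * pd j (fun y => vt y i) x * pd i (fun y => vt y j) x :=
    Finset.sum_congr rfl fun i _ => Finset.sum_congr rfl fun j _ => eqB i j
  rw [eqBs]
  clear eqA eqB eqC eqD eqE eqBs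
  -- ===== mollification =====
  set ρ : ℕ → ContDiffBump (0 : Fin d → ℝ) :=
    fun n => ⟨((n:ℝ)+1)⁻¹/2, ((n:ℝ)+1)⁻¹, by positivity,
      half_lt_self (by positivity)⟩ with hρdef
  set u : ℕ → (Fin d → ℝ) → (Fin d → ℝ) :=
    fun n => (ρ n).normed volume ⋆[ContinuousLinearMap.lsmul ℝ ℝ, volume] vt with hudef
  have hrOut_tendsto : Tendsto (fun n => (ρ n).rOut) atTop (𝓝 0) := by
    have h := tendsto_one_div_add_atTop_nhds_zero_nat (𝕜 := ℝ)
    simp only [one_div] at h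
    exact h
  have hvtLI : LocallyIntegrable vt volume := hvt.continuous.locallyIntegrable
  have hρc : ∀ n, HasCompactSupport ((ρ n).normed volume) :=
    fun n => (ρ n).hasCompactSupport_normed
  have hρLI : ∀ n, LocallyIntegrable ((ρ n).normed volume) volume :=
    fun n => ((ρ n).continuous_normed).locallyIntegrable
  have hu2 : ∀ n, ContDiff ℝ 2 (u n) := by
    intro n
    have h := (hρc n).contDiff_convolution_left (ContinuousLinearMap.lsmul ℝ ℝ)
      ((ρ n).contDiff_normed (n := 2)) hvtLI
    exact_mod_cast h
  have hud : ∀ n, Differentiable ℝ (u n) := fun n => (hu2 n).differentiable (by norm_num)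
  have hLeq : (ContinuousLinearMap.lsmul ℝ ℝ :
        ℝ →L[ℝ] (Fin d → ℝ) →L[ℝ] (Fin d → ℝ)).precompR (Fin d → ℝ)
      = (ContinuousLinearMap.lsmul ℝ ℝ :
        ℝ →L[ℝ] ((Fin d → ℝ) →L[ℝ] (Fin d → ℝ)) →L[ℝ] ((Fin d → ℝ) →L[ℝ] (Fin d → ℝ))) := by
    ext c T y
    rfl
  have hfdu : ∀ n x, fderiv ℝ (u n) x
      = (((ρ n).normed volume) ⋆[ContinuousLinearMap.lsmul ℝ ℝ, volume] (fderiv ℝ vt)) x := by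
    intro n x
    have h := (hvtc.hasFDerivAt_convolution_right (ContinuousLinearMap.lsmul ℝ ℝ)
      (hρLI n) hvt x).fderiv
    rw [hLeq] at h
    exact h
  have hval_tendsto : ∀ x, Tendsto (fun n => u n x) atTop (𝓝 (vt x)) :=
    fun x => ContDiffBump.convolution_tendsto_right_of_continuous hrOut_tendsto hvt.continuous x
  have hfd_tendsto : ∀ x, Tendsto (fun n => fderiv ℝ (u n) x) atTop (𝓝 (fderiv ℝ vt x)) := by
    intro x
    have h := ContDiffBump.convolution_tendsto_right_of_continuous (φ := ρ) (μ := volume)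
      hrOut_tendsto (hvt.continuous_fderiv (by norm_num)) x
    exact Tendsto.congr (fun n => (hfdu n x).symm) h
  -- bounds
  obtain ⟨Mv, hMv⟩ := hvtc.exists_bound_of_continuous hvt.continuous
  obtain ⟨Md, hMd⟩ := (hvtc.fderiv ℝ).exists_bound_of_continuous (hvt.continuous_fderiv (by norm_num))
  have hMv0 : 0 ≤ Mv := le_trans (norm_nonneg (vt 0)) (hMv 0)
  have hMd0 : 0 ≤ Md := le_trans (norm_nonneg _) (hMd 0)
  have hub : ∀ n x, ‖u n x‖ ≤ 3 * Mv := by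
    intro n x
    have hd : dist (u n x) (vt x) ≤ 2 * Mv := by
      refine ContDiffBump.dist_normed_convolution_le hvt.continuous.aestronglyMeasurable ?_
      intro z _
      calc dist (vt z) (vt x) ≤ ‖vt z‖ + ‖vt x‖ := dist_le_norm_add_norm _ _
        _ ≤ 2 * Mv := by linarith [hMv z, hMv x]
    calc ‖u n x‖ = dist (u n x) 0 := (dist_zero_right _).symm
      _ ≤ dist (u n x) (vt x) + dist (vt x) 0 := dist_triangle _ _ _
      _ ≤ 2 * Mv + Mv := by rw [dist_zero_right]; exact add_le_add hd (hMv x)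
      _ = 3 * Mv := by ring
  have hDub : ∀ n x, ‖fderiv ℝ (u n) x‖ ≤ 3 * Md := by
    intro n x
    have hd : dist (fderiv ℝ (u n) x) (fderiv ℝ vt x) ≤ 2 * Md := by
      rw [hfdu n x]
      refine ContDiffBump.dist_normed_convolution_le
        (hvt.continuous_fderiv (by norm_num)).aestronglyMeasurable ?_
      intro z _
      calc dist (fderiv ℝ vt z) (fderiv ℝ vt x) ≤ ‖fderiv ℝ vt z‖ + ‖fderiv ℝ vt x‖ :=
            dist_le_norm_add_norm _ _
        _ ≤ 2 * Md := by linarith [hMd z, hMd x]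
    calc ‖fderiv ℝ (u n) x‖ = dist (fderiv ℝ (u n) x) 0 := (dist_zero_right _).symm
      _ ≤ dist (fderiv ℝ (u n) x) (fderiv ℝ vt x) + dist (fderiv ℝ vt x) 0 := dist_triangle _ _ _
      _ ≤ 2 * Md + Md := by rw [dist_zero_right]; exact add_le_add hd (hMd x)
      _ = 3 * Md := by ring
  have hpdu_bound : ∀ n (i j : Fin d) x, |pd i (fun y => u n y j) x| ≤ 3 * Md := by
    intro n i j x
    rw [pd_proj (hud n x) i j]
    calc |fderiv ℝ (u n) x (Pi.single i 1) j|
        ≤ ‖fderiv ℝ (u n) x (Pi.single i 1)‖ := by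
          simpa using norm_le_pi_norm (fderiv ℝ (u n) x (Pi.single i 1)) j
      _ ≤ ‖fderiv ℝ (u n) x‖ * ‖(Pi.single i 1 : Fin d → ℝ)‖ :=
          ContinuousLinearMap.le_opNorm _ _
      _ ≤ 3 * Md * 1 := by
          refine mul_le_mul (hDub n x) ?_ (norm_nonneg _) (by linarith)
          rw [Pi.norm_single]
          simp
      _ = 3 * Md := by ring
  have huval_bound : ∀ n (j : Fin d) x, |u n x j| ≤ 3 * Mv := fun n j x =>
    le_trans (by simpa using norm_le_pi_norm (u n x) j) (hub n x)
  have hpdu_tendsto : ∀ (i j : Fin d) x, Tendsto (fun n => pd i (fun y => u n y j) x) atTop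
      (𝓝 (pd i (fun y => vt y j) x)) := by
    intro i j x
    have hc : Continuous fun L : (Fin d → ℝ) →L[ℝ] (Fin d → ℝ) => L (Pi.single i 1) j :=
      (continuous_apply j).comp
        (ContinuousLinearMap.apply ℝ (Fin d → ℝ) ((Pi.single i 1 : Fin d → ℝ))).continuous
    have h := (hc.tendsto _).comp (hfd_tendsto x)
    rw [pd_proj (hdvt x) i j]
    exact Tendsto.congr (fun n => (pd_proj (hud n x) i j).symm) h
  have huval_tendsto : ∀ (j : Fin d) x, Tendsto (fun n => u n x j) atTop (𝓝 (vt x j)) :=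
    fun j x => ((continuous_apply j).tendsto _).comp (hval_tendsto x)
  -- φ bounds
  obtain ⟨Mφ, hMφ'⟩ := (isCompact_closedBall (0 : Fin d → ℝ) R).exists_bound_of_continuousOn
    hφ.continuous.continuousOn
  obtain ⟨Mdφ, hMdφ'⟩ := (isCompact_closedBall (0 : Fin d → ℝ) R).exists_bound_of_continuousOn
    (hφ.continuous_fderiv (by norm_num)).continuousOn
  have hMφ : ∀ x ∈ closure Ω, |φ x| ≤ Mφ := fun x hx => by
    simpa [Real.norm_eq_abs] using hMφ' x (hclos hx)
  have hMφ0 : 0 ≤ Mφ :=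
    le_trans (norm_nonneg _) (hMφ' 0 (Metric.mem_closedBall_self hR0))
  have hMdφ0 : 0 ≤ Mdφ :=
    le_trans (norm_nonneg _) (hMdφ' 0 (Metric.mem_closedBall_self hR0))
  have hdφ : Differentiable ℝ φ := hφ.differentiable (by norm_num)
  have hpdφ_bound : ∀ (j : Fin d), ∀ x ∈ closure Ω, |pd j φ x| ≤ Mdφ := by
    intro j x hx
    unfold pd
    calc |fderiv ℝ φ x (Pi.single j 1)| ≤ ‖fderiv ℝ φ x‖ * ‖(Pi.single j 1 : Fin d → ℝ)‖ := by
          simpa [Real.norm_eq_abs] using ContinuousLinearMap.le_opNorm (fderiv ℝ φ x)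
            ((Pi.single j 1 : Fin d → ℝ))
      _ ≤ Mdφ * 1 := by
          refine mul_le_mul (hMdφ' x (hclos hx)) ?_ (norm_nonneg _) hMdφ0
          rw [Pi.norm_single]; simp
      _ = Mdφ := by ring
  -- helper
  have sum_abs_le : ∀ (f : Fin d → ℝ) (C : ℝ), (∀ i, |f i| ≤ C) → |∑ i, f i| ≤ d * C := by
    intro f C hC
    calc |∑ i, f i| ≤ ∑ i, |f i| := Finset.abs_sum_le_sum_abs _ _
      _ ≤ ∑ _i : Fin d, C := Finset.sum_le_sum fun i _ => hC i
      _ = d * C := by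
          rw [Finset.sum_const, Finset.card_univ, Fintype.card_fin, nsmul_eq_mul]
  -- continuity of mollified quantities
  have hcomp2 : ∀ n (j : Fin d), ContDiff ℝ 2 (fun y => u n y j) := by
    intro n j
    exact (ContinuousLinearMap.proj (R := ℝ) (φ := fun _ : Fin d => ℝ) j).contDiff.comp (hu2 n)
  have hpdc : ∀ n (i j : Fin d), Continuous (pd i (fun y => u n y j)) :=
    fun n i j => pd_continuous ((hcomp2 n j).of_le one_le_two) i
  have hcu : ∀ n (j : Fin d), Continuous fun x => u n x j :=
    fun n j => (hcomp2 n j).continuous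
  have hφc : Continuous φ := hφ.continuous
  have : IsFiniteMeasure (volume.restrict Ω) :=
    ⟨by rwa [Measure.restrict_apply_univ]⟩
  -- ===== the five convergences =====
  have hA : Tendsto (fun n => ∫ x in Ω, φ x * (∑ i, pd i (fun y => u n y i) x) ^ 2) atTop
      (𝓝 (∫ x in Ω, φ x * (∑ i, pd i (fun y => vt y i) x) ^ 2)) := by
    refine tendsto_integral_of_dominated_convergence (fun _ => Mφ * (d * (3*Md))^2) ?_ ?_ ?_ ?_
    · intro n
      exact (hφc.mul ((continuous_finset_sum _ fun i _ => hpdc n i i).pow 2)).aestronglyMeasurable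
    · exact integrable_const _
    · intro n
      filter_upwards [hΩmem] with x hx
      rw [Real.norm_eq_abs, abs_mul]
      refine mul_le_mul (hMφ x hx) ?_ (abs_nonneg _) hMφ0
      rw [abs_pow]
      exact pow_le_pow_left₀ (abs_nonneg _)
        (sum_abs_le _ _ fun i => hpdu_bound n i i x) 2
    · filter_upwards with x
      exact Tendsto.const_mul (φ x) ((tendsto_finset_sum _ fun i _ => hpdu_tendsto i i x).pow 2)
  have hB : ∀ i j : Fin d,
      Tendsto (fun n => ∫ x in Ω, φ x * pd j (fun y => u n y i) x * pd i (fun y => u n y j) x)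
        atTop (𝓝 (∫ x in Ω, φ x * pd j (fun y => vt y i) x * pd i (fun y => vt y j) x)) := by
    intro i j
    refine tendsto_integral_of_dominated_convergence (fun _ => Mφ * (3*Md) * (3*Md)) ?_ ?_ ?_ ?_
    · intro n
      exact ((hφc.mul (hpdc n j i)).mul (hpdc n i j)).aestronglyMeasurable
    · exact integrable_const _
    · intro n
      filter_upwards [hΩmem] with x hx
      rw [Real.norm_eq_abs, abs_mul, abs_mul]
      refine mul_le_mul (mul_le_mul (hMφ x hx) (hpdu_bound n j i x) (abs_nonneg _) hMφ0)
        (hpdu_bound n i j x) (abs_nonneg _) (by positivity)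
    · filter_upwards with x
      exact (Tendsto.const_mul (φ x) (hpdu_tendsto j i x)).mul (hpdu_tendsto i j x)
  have hC : Tendsto (fun n => ∫ x in Ω, ∑ j, (∑ i, u n x i * pd i (fun y => u n y j) x) * pd j φ x)
      atTop (𝓝 (∫ x in Ω, ∑ j, (∑ i, vt x i * pd i (fun y => vt y j) x) * pd j φ x)) := by
    refine tendsto_integral_of_dominated_convergence
      (fun _ => d * ((d * (3*Mv * (3*Md))) * Mdφ)) ?_ ?_ ?_ ?_
    · intro n
      exact (continuous_finset_sum _ fun j _ =>
        ((continuous_finset_sum _ fun i _ => (hcu n i).mul (hpdc n i j)).mul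
          (pd_continuous hφ j))).aestronglyMeasurable
    · exact integrable_const _
    · intro n
      filter_upwards [hΩmem] with x hx
      rw [Real.norm_eq_abs]
      refine sum_abs_le _ _ fun j => ?_
      rw [abs_mul]
      refine mul_le_mul ?_ (hpdφ_bound j x hx) (abs_nonneg _) (by positivity)
      refine sum_abs_le _ _ fun i => ?_
      rw [abs_mul]
      exact mul_le_mul (huval_bound n i x) (hpdu_bound n i j x) (abs_nonneg _) (by linarith)
    · filter_upwards with x
      refine tendsto_finset_sum _ fun j _ => ?_
      exact (tendsto_finset_sum _ fun i _ =>
        (huval_tendsto i x).mul (hpdu_tendsto i j x)).mul tendsto_const_nhds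
  have hD : Tendsto (fun n => ∫ x in Ω, (∑ i, u n x i * pd i φ x) * ∑ i, pd i (fun y => u n y i) x)
      atTop (𝓝 (∫ x in Ω, (∑ i, vt x i * pd i φ x) * ∑ i, pd i (fun y => vt y i) x)) := by
    refine tendsto_integral_of_dominated_convergence
      (fun _ => (d * (3*Mv * Mdφ)) * (d * (3*Md))) ?_ ?_ ?_ ?_
    · intro n
      exact ((continuous_finset_sum _ fun i _ => (hcu n i).mul (pd_continuous hφ i)).mul
        (continuous_finset_sum _ fun i _ => hpdc n i i)).aestronglyMeasurable
    · exact integrable_const _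
    · intro n
      filter_upwards [hΩmem] with x hx
      rw [Real.norm_eq_abs, abs_mul]
      refine mul_le_mul ?_ (sum_abs_le _ _ fun i => hpdu_bound n i i x) (abs_nonneg _)
        (by positivity)
      refine sum_abs_le _ _ fun i => ?_
      rw [abs_mul]
      exact mul_le_mul (huval_bound n i x) (hpdφ_bound i x hx) (abs_nonneg _) (by linarith)
    · filter_upwards with x
      exact (tendsto_finset_sum _ fun i _ => (huval_tendsto i x).mul tendsto_const_nhds).mul
        (tendsto_finset_sum _ fun i _ => hpdu_tendsto i i x)
  have hE : Tendsto (fun n => ∫ x, φ x * ((∑ i, u n x i * ν x i) *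
        (∑ i, pd i (fun y => u n y i) x)
        - ∑ j, (∑ i, u n x i * pd i (fun y => u n y j) x) * ν x j) ∂σ) atTop
      (𝓝 (∫ x, φ x * ((∑ i, vt x i * ν x i) * (∑ i, pd i (fun y => vt y i) x)
        - ∑ j, (∑ i, vt x i * pd i (fun y => vt y j) x) * ν x j) ∂σ)) := by
    refine tendsto_integral_of_dominated_convergence
      (fun x => Mφ * ((3*Mv) * (d * (3*Md))) * 2 * ∑ k, |ν x k|) ?_ ?_ ?_ ?_
    · intro n
      refine AEStronglyMeasurable.mul hφc.aestronglyMeasurable ?_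
      refine AEStronglyMeasurable.sub ?_ ?_
      · exact (Finset.aestronglyMeasurable_fun_sum _ fun i _ =>
          ((hcu n i).aestronglyMeasurable).mul (hνm i)).mul
          (continuous_finset_sum _ fun i _ => hpdc n i i).aestronglyMeasurable
      · exact Finset.aestronglyMeasurable_fun_sum _ fun j _ =>
          ((continuous_finset_sum _ fun i _ =>
            (hcu n i).mul (hpdc n i j)).aestronglyMeasurable).mul (hνm j)
    · exact (integrable_finset_sum _ fun k _ => (hνint k).abs).const_mul _
    · intro n
      filter_upwards [hσfr] with x hx
      rw [Real.norm_eq_abs, abs_mul]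
      have hs0 : (0:ℝ) ≤ ∑ k, |ν x k| := Finset.sum_nonneg fun k _ => abs_nonneg _
      have h1 : |∑ i, u n x i * ν x i| ≤ 3*Mv * ∑ k, |ν x k| := by
        calc |∑ i, u n x i * ν x i| ≤ ∑ i, |u n x i * ν x i| := Finset.abs_sum_le_sum_abs _ _
          _ ≤ ∑ i, 3*Mv * |ν x i| := by
              refine Finset.sum_le_sum fun i _ => ?_
              rw [abs_mul]
              exact mul_le_mul_of_nonneg_right (huval_bound n i x) (abs_nonneg _)
          _ = 3*Mv * ∑ k, |ν x k| := by rw [Finset.mul_sum]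
      have h2 : |∑ i, pd i (fun y => u n y i) x| ≤ d * (3*Md) :=
        sum_abs_le _ _ fun i => hpdu_bound n i i x
      have h3 : |∑ j, (∑ i, u n x i * pd i (fun y => u n y j) x) * ν x j|
          ≤ (d * (3*Mv * (3*Md))) * ∑ k, |ν x k| := by
        calc |∑ j, (∑ i, u n x i * pd i (fun y => u n y j) x) * ν x j|
            ≤ ∑ j, |(∑ i, u n x i * pd i (fun y => u n y j) x) * ν x j| :=
              Finset.abs_sum_le_sum_abs _ _
          _ ≤ ∑ j, (d * (3*Mv * (3*Md))) * |ν x j| := by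
              refine Finset.sum_le_sum fun j _ => ?_
              rw [abs_mul]
              refine mul_le_mul_of_nonneg_right ?_ (abs_nonneg _)
              refine sum_abs_le _ _ fun i => ?_
              rw [abs_mul]
              exact mul_le_mul (huval_bound n i x) (hpdu_bound n i j x) (abs_nonneg _)
                (by linarith)
          _ = (d * (3*Mv * (3*Md))) * ∑ k, |ν x k| := by rw [Finset.mul_sum]
      calc |φ x| * |(∑ i, u n x i * ν x i) * (∑ i, pd i (fun y => u n y i) x)
            - ∑ j, (∑ i, u n x i * pd i (fun y => u n y j) x) * ν x j|
          ≤ Mφ * (|(∑ i, u n x i * ν x i) * (∑ i, pd i (fun y => u n y i) x)|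
            + |∑ j, (∑ i, u n x i * pd i (fun y => u n y j) x) * ν x j|) := by
            refine mul_le_mul (hMφ x hx) ?_ (abs_nonneg _) hMφ0
            exact (abs_sub _ _)
        _ ≤ Mφ * ((3*Mv * ∑ k, |ν x k|) * (d * (3*Md))
            + (d * (3*Mv * (3*Md))) * ∑ k, |ν x k|) := by
            refine mul_le_mul_of_nonneg_left (add_le_add ?_ h3) hMφ0
            rw [abs_mul]
            exact mul_le_mul h1 h2 (abs_nonneg _) (by positivity)
        _ = Mφ * ((3*Mv) * (d * (3*Md))) * 2 * ∑ k, |ν x k| := by ring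
    · filter_upwards with x
      refine Tendsto.const_mul (φ x) ?_
      refine Tendsto.sub ?_ ?_
      · exact (tendsto_finset_sum _ fun i _ =>
          (huval_tendsto i x).mul tendsto_const_nhds).mul
          (tendsto_finset_sum _ fun i _ => hpdu_tendsto i i x)
      · exact tendsto_finset_sum _ fun j _ =>
          (tendsto_finset_sum _ fun i _ =>
            (huval_tendsto i x).mul (hpdu_tendsto i j x)).mul tendsto_const_nhds
  -- ===== assemble =====
  have hiden : ∀ n, (∫ x in Ω, φ x * (∑ i, pd i (fun y => u n y i) x) ^ 2)
      - ∑ i, ∑ j, ∫ x in Ω, φ x * pd j (fun y => u n y i) x * pd i (fun y => u n y j) x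
    = (∫ x in Ω, ∑ j, (∑ i, u n x i * pd i (fun y => u n y j) x) * pd j φ x)
      - (∫ x in Ω, (∑ i, u n x i * pd i φ x) * ∑ i, pd i (fun y => u n y i) x)
      + ∫ x, φ x * ((∑ i, u n x i * ν x i) * (∑ i, pd i (fun y => u n y i) x)
          - ∑ j, (∑ i, u n x i * pd i (fun y => u n y j) x) * ν x j) ∂σ :=
    fun n => smooth_case Ω hbd σ ν hdivthm (u n) (hu2 n) φ hφ
  have h1 := hA.sub (tendsto_finset_sum (Finset.univ) fun i _ =>
    tendsto_finset_sum (Finset.univ) fun j _ => hB i j)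
  have h2 := (hC.sub hD).add hE
  exact tendsto_nhds_unique h1 (Tendsto.congr (fun n => (hiden n).symm) h2)
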